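/- Let Y = {x₁, …, x_m} be a finite set equipped with a strict partial order ≺ (an irreflexive, transitive, antisymmetric relation). For each i let G_i be an abelian group equipped with an injective group homomorphism from the multiplicative group ℂˣ of nonzero complex numbers into G_i; identify each λ ∈ ℂˣ with its image and write λ·g for the corresponding product in G_i. Suppose that to each pair with x_i ≺ x_j is associated a pair (c_ij, d_ij) with c_ij ∈ G_i and d_ij ∈ G_j such that: (i) if x_i ≺ x_j and x_i ≺ x_k then c_ij = λ·c_ik for some λ ∈ ℂˣ; (ii) if x_i ≺ x_j and x_k ≺ x_j then d_ij = λ·d_kj for some λ ∈ ℂˣ; (iii) if x_i ≺ x_j ≺ x_k then d_ij = λ·c_jk for some λ ∈ ℂˣ; (iv) if x_i ≺ x_j ≺ x_k and λ ∈ ℂˣ satisfies d_ij = λ·c_jk, then there exists μ ∈ ℂˣ with c_ik = μ·λ⁻¹·c_ij and d_ik = μ·d_jk. Suppose further that X ⊆ Y is a subset such that every 1-cycle of the comparability graph of (X, ≺) is a ℤ-linear combination of boundaries of triangles of the comparability graph of (Y, ≺). Then there exists a choice of elements g_i ∈ G_i, for each x_i ∈ X, such that for every pair x_i ≺ x_j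 with x_i, x_j ∈ X there is λ_ij ∈ ℂˣ with c_ij = λ_ij·g_i and d_ij = λ_ij·g_j. -/

import Mathlib

attribute [local instance] Classical.propDecidable

noncomputable section

/-- The adjacency relation of the comparability graph of a relation `E`. -/
def Adjacent {X : Type*} (E : X → X → Prop) (x y : X) : Prop :=
  x ≠ y ∧ (E x y ∨ E y x)

/-- A 1-cycle of the comparability graph of `E` : a finitely supported,
antisymmetric, integer-valued function on ordered pairs of adjacent points
whose "divergence" at every point vanishes. -/
def IsOneCycle {X : Type*} (E : X → X → Prop) (c : X → X → ℤ) : Prop :=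
  (∀ x y, c x y ≠ 0 → Adjacent E x y) ∧
  (∀ x y, c x y = - c y x) ∧
  {p : X × X | c p.1 p.2 ≠ 0}.Finite ∧
  (∀ x, ∑ᶠ y, c x y = 0)

/-- The boundary of the triangle `(a, b, c)`. -/
def triangleBoundary {X : Type*} (a b c : X) : X → X → ℤ := fun u v =>
  (if u = a ∧ v = b then 1 else 0) + (if u = b ∧ v = c then 1 else 0) +
  (if u = c ∧ v = a then 1 else 0) - (if u = b ∧ v = a then 1 else 0) -
  (if u = c ∧ v = b then 1 else 0) - (if u = a ∧ v = c then 1 else 0)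

/-- The boundaries of triangles (triples of mutually adjacent points) of the
comparability graph of `E`. -/
def triangleBoundaries {X : Type*} (E : X → X → Prop) : Set (X → X → ℤ) :=
  {d | ∃ a b c : X, Adjacent E a b ∧ Adjacent E b c ∧ Adjacent E a c ∧
    d = triangleBoundary a b c}

/-- Every 1-cycle of the comparability graph of `E` is a `ℤ`-linear
combination of boundaries of triangles. -/
def FirstHomologyVanishes {X : Type*} (E : X → X → Prop) : Prop :=
  ∀ c : X → X → ℤ, IsOneCycle E c → c ∈ AddSubgroup.closure (triangleBoundaries E)

namespace SCT

variable {Y : Type*}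

def delta (u v : Y) : Y → Y → ℤ := fun p q => if p = u ∧ q = v then 1 else 0

def edgeChain (u v : Y) : Y → Y → ℤ := delta u v - delta v u

lemma edgeChain_apply (u v p q : Y) : edgeChain u v p q = delta u v p q - delta v u p q := rfl

lemma delta_swap (u v p q : Y) : delta v u p q = delta u v q p := by
  simp [delta, and_comm]

lemma edgeChain_antisym (u v p q : Y) : edgeChain u v p q = - edgeChain u v q p := by
  simp only [edgeChain, Pi.sub_apply, delta]
  split_ifs <;> first | tauto | ring

lemma edgeChain_swap (u v : Y) : edgeChain v u = - edgeChain u v := by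
  funext p q
  simp only [edgeChain, Pi.neg_apply, Pi.sub_apply, delta]
  split_ifs <;> first | tauto | ring

def compGraph (E : Y → Y → Prop) : SimpleGraph Y where
  Adj := Adjacent E
  symm := ⟨fun x y h => ⟨h.1.symm, h.2.symm⟩⟩
  loopless := ⟨fun x h => h.1 rfl⟩

def walkChain {G : SimpleGraph Y} : {u v : Y} → G.Walk u v → (Y → Y → ℤ)
  | u, _, SimpleGraph.Walk.cons (v := w) _ p => edgeChain u w + walkChain p
  | _, _, SimpleGraph.Walk.nil => 0

@[simp] lemma walkChain_nil {G : SimpleGraph Y} {u : Y} :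
    walkChain (SimpleGraph.Walk.nil : G.Walk u u) = 0 := rfl

@[simp] lemma walkChain_cons {G : SimpleGraph Y} {u v w : Y} (h : G.Adj u v) (p : G.Walk v w) :
    walkChain (SimpleGraph.Walk.cons h p) = edgeChain u v + walkChain p := rfl

lemma walkChain_copy {G : SimpleGraph Y} {u v u' v' : Y} (p : G.Walk u v)
    (h1 : u = u') (h2 : v = v') : walkChain (p.copy h1 h2) = walkChain p := by
  subst h1; subst h2; rfl

lemma walkChain_append {G : SimpleGraph Y} {u v w : Y} (p : G.Walk u v) (q : G.Walk v w) :
    walkChain (p.append q) = walkChain p + walkChain q := by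
  induction p with
  | nil => simp [SimpleGraph.Walk.nil_append]
  | cons h p ih => rw [SimpleGraph.Walk.cons_append, walkChain_cons, walkChain_cons, ih, add_assoc]

lemma walkChain_reverse {G : SimpleGraph Y} {u v : Y} (p : G.Walk u v) :
    walkChain p.reverse = - walkChain p := by
  induction p with
  | nil => simp
  | cons h p ih =>
    rw [SimpleGraph.Walk.reverse_cons, walkChain_append, ih, walkChain_cons, walkChain_cons,
      walkChain_nil, edgeChain_swap]
    abel

lemma walkChain_antisym {G : SimpleGraph Y} {u v : Y} (p : G.Walk u v) (x y : Y) :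
    walkChain p x y = - walkChain p y x := by
  induction p with
  | nil => simp
  | cons h p ih =>
    simp only [walkChain_cons, Pi.add_apply, ih, edgeChain_antisym _ _ x y]
    ring

lemma delta_ne_zero {u v p q : Y} (h : delta u v p q ≠ 0) : p = u ∧ q = v := by
  by_contra hc
  simp [delta, hc] at h

lemma walkChain_support {G : SimpleGraph Y} {u v : Y} (p : G.Walk u v) (x y : Y)
    (h : walkChain p x y ≠ 0) : G.Adj x y := by
  induction p with
  | nil => simp at h
  | @cons a b c' hadj p ih =>
    simp only [walkChain_cons, Pi.add_apply] at h
    by_cases h2 : walkChain p x y = 0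
    · rw [h2, add_zero] at h
      rw [edgeChain_apply] at h
      by_cases hd1 : delta a b x y = 0
      · rw [hd1, zero_sub, neg_ne_zero] at h
        obtain ⟨rfl, rfl⟩ := delta_ne_zero h
        exact hadj.symm
      · obtain ⟨rfl, rfl⟩ := delta_ne_zero hd1
        exact hadj
    · exact ih h2

lemma sum_delta [Fintype Y] (u v x : Y) : ∑ y, delta u v x y = if x = u then 1 else 0 := by
  classical
  by_cases hx : x = u
  · simp [delta, hx]
  · simp [delta, hx]

lemma sum_walkChain [Fintype Y] {G : SimpleGraph Y} {a b : Y} (p : G.Walk a b) (x : Y) :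
    ∑ y, walkChain p x y = (if x = a then 1 else 0) - (if x = b then 1 else 0) := by
  classical
  induction p with
  | nil => simp
  | @cons u w b' h p ih =>
    simp only [walkChain_cons, Pi.add_apply, Finset.sum_add_distrib, ih, edgeChain_apply,
      Finset.sum_sub_distrib, sum_delta]
    ring

def Fprod [Fintype Y] (fh : Y → Y → ℂˣ) (cy : Y → Y → ℤ) : ℂˣ :=
  ∏ i, ∏ j, fh i j ^ cy i j

lemma Fprod_zero [Fintype Y] (fh : Y → Y → ℂˣ) : Fprod fh 0 = 1 := by
  simp [Fprod]

lemma Fprod_add [Fintype Y] (fh : Y → Y → ℂˣ) (c c' : Y → Y → ℤ) :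
    Fprod fh (c + c') = Fprod fh c * Fprod fh c' := by
  simp [Fprod, zpow_add, Finset.prod_mul_distrib]

lemma Fprod_neg [Fintype Y] (fh : Y → Y → ℂˣ) (c : Y → Y → ℤ) :
    Fprod fh (-c) = (Fprod fh c)⁻¹ := by
  simp [Fprod, zpow_neg]

lemma Fprod_sub [Fintype Y] (fh : Y → Y → ℂˣ) (c c' : Y → Y → ℤ) :
    Fprod fh (c - c') = Fprod fh c * (Fprod fh c')⁻¹ := by
  rw [sub_eq_add_neg, Fprod_add, Fprod_neg]

lemma Fprod_delta [Fintype Y] (fh : Y → Y → ℂˣ) (u v : Y) :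
    Fprod fh (delta u v) = fh u v := by
  classical
  unfold Fprod delta
  rw [Finset.prod_eq_single u]
  · rw [Finset.prod_eq_single v]
    · simp
    · intro b _ hb; simp [hb]
    · simp
  · intro b _ hb; simp [hb]
  · simp

lemma Fprod_edgeChain [Fintype Y] (fh : Y → Y → ℂˣ) (u v : Y) :
    Fprod fh (edgeChain u v) = fh u v * (fh v u)⁻¹ := by
  rw [edgeChain, Fprod_sub, Fprod_delta, Fprod_delta]

lemma isOneCycle_walkChain_closed [Fintype Y] (E : Y → Y → Prop) {u : Y}
    (p : (compGraph E).Walk u u) : IsOneCycle E (walkChain p) := by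
  refine ⟨fun x y h => walkChain_support p x y h, fun x y => walkChain_antisym p x y,
    Set.toFinite _, fun x => ?_⟩
  rw [finsum_eq_sum_of_fintype, sum_walkChain]
  ring

end SCT

open SCT in

/-- **Lemma 4.5.** Let `Y` be a finite set with a strict partial order `r`, let
`Gᵢ` be abelian groups containing (injective images of) `ℂˣ`, and let pairs
`(c_ij, d_ij)` be given for `i ≺ j`, satisfying the compatibility conditions
(i)–(iv).  If `X ⊆ Y` is such that every 1-cycle of the comparability graph of
`(X, ≺)` is a `ℤ`-combination of triangle boundaries of `(Y, ≺)`, then there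
are `gᵢ ∈ Gᵢ` (for `i ∈ X`) with `(c_ij, d_ij) = (λ_ij·g_i, λ_ij·g_j)` for all
pairs `i ≺ j` in `X`. -/
theorem scalar_cocycle_trivialization
    {Y : Type*} [Fintype Y] (r : Y → Y → Prop)
    (hirr : ∀ i, ¬ r i i)
    (htrans : ∀ i j k, r i j → r j k → r i k)
    (hanti : ∀ i j, r i j → r j i → i = j)
    (G : Y → Type*) [∀ i, CommGroup (G i)]
    (emb : ∀ i, ℂˣ →* G i) (hemb : ∀ i, Function.Injective (emb i))
    (c : ∀ (i : Y), Y → G i) (d : ∀ (_ : Y) (j : Y), G j)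
    (h1 : ∀ i j k, r i j → r i k → ∃ lam : ℂˣ, c i j = emb i lam * c i k)
    (h2 : ∀ i j k, r i j → r k j → ∃ lam : ℂˣ, d i j = emb j lam * d k j)
    (h3 : ∀ i j k, r i j → r j k → ∃ lam : ℂˣ, d i j = emb j lam * c j k)
    (h4 : ∀ i j k, r i j → r j k → ∀ lam : ℂˣ, d i j = emb j lam * c j k →
      ∃ mu : ℂˣ, c i k = emb i (mu * lam⁻¹) * c i j ∧ d i k = emb k mu * d j k)
    (X : Set Y)
    (hX : ∀ cyc : Y → Y → ℤ,
      IsOneCycle (fun u v => u ∈ X ∧ v ∈ X ∧ r u v) cyc →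
      cyc ∈ AddSubgroup.closure (triangleBoundaries r)) :
    ∃ g : ∀ i, G i, ∀ i ∈ X, ∀ j ∈ X, r i j →
      ∃ lam : ℂˣ, c i j = emb i lam * g i ∧ d i j = emb j lam * g j := by
  classical
  set e : ∀ i, G i := (fun i =>
    if h : ∃ j, r i j then c i h.choose
    else if h' : ∃ k, r k i then d h'.choose i else 1) with he
  have hα : ∀ i j, r i j → ∃ a : ℂˣ, c i j = emb i a * e i := by
    intro i j hij
    have h : ∃ j', r i j' := ⟨j, hij⟩
    have hei : e i = c i h.choose := by simp only [he]; rw [dif_pos h]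
    rw [hei]
    exact h1 i j h.choose hij h.choose_spec
  have hβ : ∀ i j, r i j → ∃ b : ℂˣ, d i j = emb j b * e j := by
    intro i j hij
    by_cases h : ∃ k, r j k
    · have hej : e j = c j h.choose := by simp only [he]; rw [dif_pos h]
      rw [hej]
      exact h3 i j h.choose hij h.choose_spec
    · have h' : ∃ k, r k j := ⟨i, hij⟩
      have hej : e j = d h'.choose j := by simp only [he]; rw [dif_neg h, dif_pos h']
      rw [hej]
      exact h2 i j h'.choose hij h'.choose_spec
  set α : Y → Y → ℂˣ := (fun i j => if h : r i j then (hα i j h).choose else 1) with hαdef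
  set β : Y → Y → ℂˣ := (fun i j => if h : r i j then (hβ i j h).choose else 1) with hβdef
  have hc : ∀ i j (hij : r i j), c i j = emb i (α i j) * e i := by
    intro i j hij
    have : α i j = (hα i j hij).choose := by simp only [hαdef]; rw [dif_pos hij]
    rw [this]
    exact (hα i j hij).choose_spec
  have hd : ∀ i j (hij : r i j), d i j = emb j (β i j) * e j := by
    intro i j hij
    have : β i j = (hβ i j hij).choose := by simp only [hβdef]; rw [dif_pos hij]
    rw [this]
    exact (hβ i j hij).choose_spec
  set f : Y → Y → ℂˣ := (fun i j => β i j * (α i j)⁻¹) with hfdef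
  have hfval : ∀ i j, f i j = β i j * (α i j)⁻¹ := fun _ _ => rfl
  have hcancel : ∀ (i : Y) (a b : ℂˣ) (x : G i), emb i a * x = emb i b * x → a = b :=
    fun i a b x h => hemb i (mul_right_cancel h)
  have hnr : ∀ u v, r u v → ¬ r v u := by
    intro u v huv hvu
    have h := hanti u v huv hvu
    subst h
    exact hirr u huv
  have hf1 : ∀ u v, ¬ r u v → f u v = 1 := by
    intro u v h
    have ha : α u v = 1 := by simp only [hαdef]; rw [dif_neg h]
    have hb : β u v = 1 := by simp only [hβdef]; rw [dif_neg h]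
    rw [hfval, ha, hb, inv_one, mul_one]
  have hco : ∀ i j k, r i j → r j k → f i k = f i j * f j k := by
    intro i j k hij hjk
    obtain ⟨lam, hlam⟩ := h3 i j k hij hjk
    have e1 : β i j = lam * α j k := by
      apply hcancel j _ _ (e j)
      rw [← hd i j hij, map_mul, mul_assoc, ← hc j k hjk, hlam]
    obtain ⟨mu, hmu1, hmu2⟩ := h4 i j k hij hjk lam hlam
    have e2 : α i k = mu * lam⁻¹ * α i j := by
      apply hcancel i _ _ (e i)
      rw [← hc i k (htrans i j k hij hjk), map_mul, mul_assoc, ← hc i j hij, hmu1]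
    have e3 : β i k = mu * β j k := by
      apply hcancel k _ _ (e k)
      rw [← hd i k (htrans i j k hij hjk), map_mul, mul_assoc, ← hd j k hjk, hmu2]
    rw [hfval, hfval, hfval, e1, e2, e3]
    rw [Units.ext_iff]
    push_cast
    field_simp
  have hFtri : ∀ dd ∈ triangleBoundaries r, Fprod f dd = 1 := by
    rintro dd ⟨a, b, cc, hab, hbc, hac, rfl⟩
    have htb : (triangleBoundary a b cc : Y → Y → ℤ)
        = delta a b + delta b cc + delta cc a - delta b a - delta cc b - delta a cc := by
      funext u v
      simp only [triangleBoundary, delta, Pi.add_apply, Pi.sub_apply]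
    rw [htb, Fprod_sub, Fprod_sub, Fprod_sub, Fprod_add, Fprod_add, Fprod_delta, Fprod_delta,
      Fprod_delta, Fprod_delta, Fprod_delta, Fprod_delta]
    rcases hab.2 with h1' | h1' <;> rcases hbc.2 with h2' | h2' <;> rcases hac.2 with h3' | h3'
    · -- r a b, r b cc, r a cc
      rw [hf1 b a (hnr a b h1'), hf1 cc b (hnr b cc h2'), hf1 cc a (hnr a cc h3'),
        hco a b cc h1' h2']
      group
    · -- r a b, r b cc, r cc a : contradiction
      exact absurd (hanti a cc (htrans a b cc h1' h2') h3') hac.1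
    · -- r a b, r cc b, r a cc : chain a cc b
      rw [hf1 b a (hnr a b h1'), hf1 b cc (hnr cc b h2'), hf1 cc a (hnr a cc h3'),
        hco a cc b h3' h2']
      rw [Units.ext_iff]; push_cast; field_simp; try ring
    · -- r a b, r cc b, r cc a : chain cc a b
      rw [hf1 b a (hnr a b h1'), hf1 b cc (hnr cc b h2'), hf1 a cc (hnr cc a h3'),
        hco cc a b h3' h1']
      rw [Units.ext_iff]; push_cast; field_simp; try ring
    · -- r b a, r b cc, r a cc : chain b a cc
      rw [hf1 a b (hnr b a h1'), hf1 cc b (hnr b cc h2'), hf1 cc a (hnr a cc h3'),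
        hco b a cc h1' h3']
      rw [Units.ext_iff]; push_cast; field_simp; try ring
    · -- r b a, r b cc, r cc a : chain b cc a
      rw [hf1 a b (hnr b a h1'), hf1 cc b (hnr b cc h2'), hf1 a cc (hnr cc a h3'),
        hco b cc a h2' h3']
      rw [Units.ext_iff]; push_cast; field_simp; try ring
    · -- r b a, r cc b, r a cc : contradiction
      exact absurd (hanti a cc h3' (htrans cc b a h2' h1')) hac.1
    · -- r b a, r cc b, r cc a : chain cc b a
      rw [hf1 a b (hnr b a h1'), hf1 b cc (hnr cc b h2'), hf1 a cc (hnr cc a h3'),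
        hco cc b a h2' h1']
      rw [Units.ext_iff]; push_cast; field_simp; try ring
  have hclosure : ∀ cy ∈ AddSubgroup.closure (triangleBoundaries r), Fprod f cy = 1 := by
    intro cy hcy
    let K : AddSubgroup (Y → Y → ℤ) :=
      { carrier := {z | Fprod f z = 1}
        zero_mem' := Fprod_zero f
        add_mem' := fun {a} {b} ha hb => by
          simp only [Set.mem_setOf_eq] at ha hb ⊢
          rw [Fprod_add, ha, hb, one_mul]
        neg_mem' := fun {a} ha => by
          simp only [Set.mem_setOf_eq] at ha ⊢
          rw [Fprod_neg, ha, inv_one] }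
    exact (AddSubgroup.closure_le K).mpr (fun dd hdd => hFtri dd hdd) hcy
  have hcyc : ∀ (u : Y) (p : (compGraph (fun u v => u ∈ X ∧ v ∈ X ∧ r u v)).Walk u u),
      Fprod f (walkChain p) = 1 := fun u p =>
    hclosure _ (hX _ (isOneCycle_walkChain_closed _ p))
  have hrep : ∀ x : Y,
      (compGraph (fun u v => u ∈ X ∧ v ∈ X ∧ r u v)).Reachable
        (Quot.out ((compGraph (fun u v => u ∈ X ∧ v ∈ X ∧ r u v)).connectedComponentMk x)) x := by
    intro x
    apply SimpleGraph.ConnectedComponent.exact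
    exact Quot.out_eq _
  set t : Y → ℂˣ := (fun x => Fprod f (walkChain (hrep x).some)) with htdef
  have ht : ∀ i ∈ X, ∀ j ∈ X, r i j → t j = f i j * t i := by
    intro i hi j hj hij
    have hadj : (compGraph (fun u v => u ∈ X ∧ v ∈ X ∧ r u v)).Adj i j := by
      refine ⟨fun h => ?_, Or.inl ⟨hi, hj, hij⟩⟩
      rw [h] at hij
      exact hirr j hij
    have hcompeq := SimpleGraph.ConnectedComponent.sound hadj.reachable
    have houteq : Quot.out ((compGraph (fun u v => u ∈ X ∧ v ∈ X ∧ r u v)).connectedComponentMk i)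
        = Quot.out ((compGraph (fun u v => u ∈ X ∧ v ∈ X ∧ r u v)).connectedComponentMk j) := by
      rw [hcompeq]
    have h1w := hcyc _ ((((hrep i).some.append (SimpleGraph.Walk.cons hadj
      SimpleGraph.Walk.nil)).append (((hrep j).some.copy houteq.symm rfl).reverse)))
    rw [walkChain_append, walkChain_append, walkChain_reverse, walkChain_copy, walkChain_cons,
      walkChain_nil, add_zero, Fprod_add, Fprod_add, Fprod_neg, Fprod_edgeChain,
      hf1 j i (hnr i j hij), inv_one, mul_one] at h1w
    have h2w := mul_inv_eq_one.mp h1w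
    simp only [htdef]
    rw [← h2w, mul_comm]
  refine ⟨fun i => emb i (t i) * e i, ?_⟩
  intro i hi j hj hij
  refine ⟨α i j * (t i)⁻¹, ?_, ?_⟩
  · beta_reduce
    rw [hc i j hij, ← mul_assoc, ← map_mul, inv_mul_cancel_right]
  · beta_reduce
    rw [hd i j hij, ht i hi j hj hij, ← mul_assoc, ← map_mul]
    have hkey : α i j * (t i)⁻¹ * (f i j * t i) = β i j := by
      rw [hfval]
      rw [Units.ext_iff]
      push_cast
      field_simp
    rw [hkey]
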